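/- Let A be an algebra over a field of characteristic zero, and let D, Q ∈ A with L = -D² + Q. Define the linear maps ad_D(X) = DX - XD and ad_Q(X) = QX - XQ on A, and suppose X ∈ A satisfies ad_D(X') = ad_Q(X) for some X' ∈ A (i.e. ad_Q(X) lies in the image of ad_D with preimage X'). Then for every k ≥ 0, -4·ad_D(L^{k+1}) = ad_D³(L^k) - 2Q·ad_D(L^k) - 2·ad_D(Q·L^k) + ad_Q(ad_D(L^k)) + ad_D(ad_Q(L^k)) + ad_Q(D·L^k + L^k·D). -/
import Mathlib

private lemma stmt_7_aux {A : Type*} [Ring A] (D Q M : A)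
    (hE : Q * M - M * Q = D ^ 2 * M - M * D ^ 2) :
    -4 * (D * (M * (-D ^ 2 + Q)) - (M * (-D ^ 2 + Q)) * D) =
      (D * (D * (D * M - M * D) - (D * M - M * D) * D)
          - (D * (D * M - M * D) - (D * M - M * D) * D) * D)
        - 2 * (Q * (D * M - M * D)) - 2 * (D * (Q * M) - (Q * M) * D)
        + (Q * (D * M - M * D) - (D * M - M * D) * Q)
        + (D * (Q * M - M * Q) - (Q * M - M * Q) * D)
        + (Q * (D * M + M * D) - (D * M + M * D) * Q) := by
  rw [← sub_eq_zero]
  have key :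
      -4 * (D * (M * (-D ^ 2 + Q)) - (M * (-D ^ 2 + Q)) * D) -
        ((D * (D * (D * M - M * D) - (D * M - M * D) * D)
            - (D * (D * M - M * D) - (D * M - M * D) * D) * D)
          - 2 * (Q * (D * M - M * D)) - 2 * (D * (Q * M) - (Q * M) * D)
          + (Q * (D * M - M * D) - (D * M - M * D) * Q)
          + (D * (Q * M - M * Q) - (Q * M - M * Q) * D)
          + (Q * (D * M + M * D) - (D * M + M * D) * Q)) =
        -(D * ((D ^ 2 * M - M * D ^ 2) - (Q * M - M * Q)))
          + 3 * (((D ^ 2 * M - M * D ^ 2) - (Q * M - M * Q)) * D) := by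
    noncomm_ring
  rw [key, hE, sub_self]
  simp

theorem stmt_7 {A : Type*} [Ring A] [Algebra ℚ A] (D Q X X' : A)
    (hX : D * X' - X' * D = Q * X - X * Q) (k : ℕ)
    (L : A) (hL : L = -D^2 + Q)
    (adD adQ : A → A)
    (hadD : ∀ Y, adD Y = D * Y - Y * D)
    (hadQ : ∀ Y, adQ Y = Q * Y - Y * Q) :
    -4 * adD (L ^ (k + 1)) =
      adD (adD (adD (L ^ k))) - 2 * (Q * adD (L ^ k)) - 2 * adD (Q * L ^ k)
        + adQ (adD (L ^ k)) + adD (adQ (L ^ k)) + adQ (D * L ^ k + L ^ k * D) := by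
  subst hL
  set M := (-D ^ 2 + Q) ^ k with hM
  have hc : (-D ^ 2 + Q) * M = M * (-D ^ 2 + Q) := by
    rw [hM]; exact ((Commute.refl (-D ^ 2 + Q)).pow_right k).eq
  have hE : Q * M - M * Q = D ^ 2 * M - M * D ^ 2 := by
    calc Q * M - M * Q
        = ((-D ^ 2 + Q) * M - M * (-D ^ 2 + Q)) + (D ^ 2 * M - M * D ^ 2) := by noncomm_ring
      _ = D ^ 2 * M - M * D ^ 2 := by rw [hc]; noncomm_ring
  simp only [hadD, hadQ]
  rw [pow_succ (-D ^ 2 + Q) k, ← hM]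
  exact stmt_7_aux D Q M hE
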